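/- Let k ≥ 2 be an integer and let A be a finite k-convex set of real numbers. Then |2^k A − (2^k − 1)A| ≫ |A|^{k+1} / 2^{k²}, i.e. there is an absolute constant c > 0 (independent of k and A) such that the set 2^k A − (2^k − 1)A has at least c·|A|^{k+1}·2^{−k²} elements. -/

import Mathlib

open Finset Pointwise

/-- The list of consecutive differences of a list of reals. -/
def diffList : List ℝ → List ℝ
  | a :: b :: rest => (b - a) :: diffList (b :: rest)
  | _ => []

/-- `ListKConvex k l` means the increasing list `l` is `k`-convex: `l` is strictly
increasing and its iterated difference lists of orders `1, …, k` are strictly increasing. -/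
def ListKConvex : ℕ → List ℝ → Prop
  | 0, l => l.Chain' (· < ·)
  | k + 1, l => l.Chain' (· < ·) ∧ ListKConvex k (diffList l)

/-- A finite set of reals is `k`-convex if its increasing enumeration is `k`-convex. -/
def FinsetKConvex (k : ℕ) (A : Finset ℝ) : Prop :=
  ListKConvex k (A.sort (· ≤ ·))

/-- `iterSum n A = A + ⋯ + A` (`n` copies), with `iterSum 0 A = {0}`. -/
noncomputable def iterSum : ℕ → Finset ℝ → Finset ℝ
  | 0, _ => {0}
  | n + 1, A => A + iterSum n A

/-! ### Auxiliary development -/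

noncomputable def delta (f : ℕ → ℝ) : ℕ → ℝ := fun j => f (j + 1) - f j

lemma delta_iter_succ (i : ℕ) (f : ℕ → ℝ) (j : ℕ) :
    delta^[i+1] f j = delta^[i] f (j+1) - delta^[i] f j := by
  rw [Function.iterate_succ_apply']; rfl

lemma diffList_length (l : List ℝ) : (diffList l).length = l.length - 1 := by
  induction l with
  | nil => simp [diffList]
  | cons a t ih =>
    cases t with
    | nil => simp [diffList]
    | cons b r => simp [diffList] at ih ⊢; omega

lemma diffList_getD (l : List ℝ) : ∀ (j : ℕ), j + 1 < l.length →
    (diffList l).getD j 0 = l.getD (j+1) 0 - l.getD j 0 := by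
  induction l with
  | nil => intro j h; simp at h
  | cons a t ih =>
    cases t with
    | nil => intro j h; simp at h
    | cons b r =>
      intro j h
      cases j with
      | zero => simp [diffList]
      | succ j' =>
        have := ih j' (by simpa using h)
        simpa [diffList] using this

lemma iter_diffList_length (i : ℕ) : ∀ l : List ℝ, (diffList^[i] l).length = l.length - i := by
  induction i with
  | zero => simp
  | succ i ih =>
    intro l
    rw [Function.iterate_succ_apply, ih, diffList_length]
    omega

lemma delta_congr (i : ℕ) : ∀ (f g : ℕ → ℝ) (j : ℕ),
    (∀ m, j ≤ m → m ≤ j + i → f m = g m) → delta^[i] f j = delta^[i] g j := by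
  induction i with
  | zero => intro f g j h; simpa using h j le_rfl (by omega)
  | succ i ih =>
    intro f g j h
    rw [Function.iterate_succ_apply, Function.iterate_succ_apply]
    exact ih _ _ j fun m hm hm' => by
      simp only [delta]; rw [h m hm (by omega), h (m+1) (by omega) (by omega)]

lemma iter_diffList_getD (i : ℕ) : ∀ (l : List ℝ) (j : ℕ), j + i < l.length →
    (diffList^[i] l).getD j 0 = delta^[i] (fun m => l.getD m 0) j := by
  induction i with
  | zero => intro l j _; simp
  | succ i ih =>
    intro l j h
    rw [Function.iterate_succ_apply, Function.iterate_succ_apply]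
    rw [ih (diffList l) j (by rw [diffList_length]; omega)]
    exact delta_congr i _ _ j fun m hm hm' => by
      simp only [delta]
      exact diffList_getD l m (by omega)

lemma listKConvex_chain : ∀ (k : ℕ) (l : List ℝ), ListKConvex k l → ∀ i ≤ k,
    (diffList^[i] l).Chain' (· < ·) := by
  intro k
  induction k with
  | zero => intro l h i hi; interval_cases i; simpa [ListKConvex] using h
  | succ k ih =>
    intro l h i hi
    obtain ⟨h1, h2⟩ := h
    cases i with
    | zero => simpa using h1
    | succ i =>
      rw [Function.iterate_succ_apply]
      exact ih (diffList l) h2 i (by omega)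

lemma chain_getD {l : List ℝ} (h : l.Chain' (· < ·)) {j : ℕ} (hj : j + 1 < l.length) :
    l.getD j 0 < l.getD (j+1) 0 := by
  rw [List.getD_eq_getElem _ _ (by omega : j < l.length), List.getD_eq_getElem _ _ hj]
  exact List.isChain_iff_getElem.mp h j (by omega)

lemma iterSum_nonempty {A : Finset ℝ} (hA : A.Nonempty) : ∀ n, (iterSum n A).Nonempty := by
  intro n
  induction n with
  | zero => exact ⟨0, Finset.mem_singleton_self 0⟩
  | succ n ih => exact hA.add ih

lemma iterSum_add_mem {A : Finset ℝ} : ∀ (m n : ℕ) (x y : ℝ), x ∈ iterSum m A →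
    y ∈ iterSum n A → x + y ∈ iterSum (m + n) A := by
  intro m
  induction m with
  | zero =>
    intro n x y hx hy
    simp only [iterSum, Finset.mem_singleton] at hx
    subst hx
    simpa using hy
  | succ m ih =>
    intro n x y hx hy
    simp only [iterSum, Finset.mem_add] at hx
    obtain ⟨u, hu, v, hv, rfl⟩ := hx
    have : m + 1 + n = (m + n) + 1 := by omega
    rw [this]
    show u + v + y ∈ iterSum ((m+n)+1) A
    have hrw : iterSum ((m+n)+1) A = A + iterSum (m+n) A := rfl
    rw [hrw, add_assoc]
    exact Finset.add_mem_add hu (ih n v y hv hy)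

lemma mem_iterSum_one {A : Finset ℝ} {x : ℝ} (hx : x ∈ A) : x ∈ iterSum 1 A := by
  have : x = x + 0 := by ring
  rw [this]
  exact Finset.add_mem_add hx (Finset.mem_singleton_self 0)

section
variable {k N : ℕ} {a : ℕ → ℝ} {A : Finset ℝ}
  (hmon : ∀ i ≤ k, ∀ j, j + i + 2 ≤ N → delta^[i] a j < delta^[i] a (j+1))

include hmon in
lemma monLt : ∀ i ≤ k, ∀ j j', j < j' → j' + i + 1 ≤ N → delta^[i] a j < delta^[i] a j' := by
  intro i hi j j'
  induction j' with
  | zero => omega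
  | succ j'' ih =>
    intro hlt hb
    rcases Nat.lt_or_ge j j'' with h | h
    · exact lt_trans (ih h (by omega)) (hmon i hi j'' (by omega))
    · have : j = j'' := by omega
      subst this
      exact hmon i hi j (by omega)

include hmon in
lemma monLe : ∀ i ≤ k, ∀ j j', j ≤ j' → j' + i + 1 ≤ N →
    delta^[i] a j ≤ delta^[i] a j' := by
  intro i hi j j' hle hb
  rcases Nat.lt_or_ge j j' with h | h
  · exact le_of_lt (monLt hmon i hi j j' h hb)
  · have : j = j' := by omega
    subst this; exact le_rfl

include hmon in
lemma deltaPos : ∀ i, 1 ≤ i → i ≤ k + 1 → ∀ j, j + i + 1 ≤ N → 0 < delta^[i] a j := by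
  intro i h1 hik j hb
  cases i with
  | zero => omega
  | succ i' =>
    rw [delta_iter_succ]
    have := hmon i' (by omega) j (by omega)
    linarith

include hmon in
lemma claimC : ∀ d m, m + d = k → 1 ≤ m → ∀ J : ℕ → ℕ,
    (∀ i, m ≤ i → i < k → J (i+1) + 1 ≤ J i) →
    (∀ i, m ≤ i → i ≤ k → J i + i + 2 ≤ N) →
    ∑ i ∈ Finset.Icc m k, delta^[i] a (J i) < delta^[m] a (J m + 1) := by
  intro d
  induction d with
  | zero =>
    intro m hm _ J _ hval
    have : m = k := by omega
    subst this
    rw [Finset.Icc_self, Finset.sum_singleton]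
    exact hmon m le_rfl (J m) (hval m le_rfl le_rfl)
  | succ d ih =>
    intro m hm h1 J hdec hval
    have hmk : m < k := by omega
    have hins : Finset.Icc m k = insert m (Finset.Icc (m+1) k) := by
      ext x; simp [Finset.mem_Icc, Finset.mem_insert]; omega
    rw [hins, Finset.sum_insert (by simp [Finset.mem_Icc])]
    have hIH := ih (m+1) (by omega) (by omega) J
      (fun i hi hik => hdec i (by omega) hik)
      (fun i hi hik => hval i (by omega) hik)
    have hmono : delta^[m+1] a (J (m+1) + 1) ≤ delta^[m+1] a (J m) :=
      monLe hmon (m+1) (by omega) _ _ (hdec m le_rfl hmk)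
        (by have := hval m (by omega) (by omega); omega)
    have hsucc := delta_iter_succ m a (J m)
    linarith

variable (hmem : ∀ j, j < N → a j ∈ A)

include hmem in
lemma delta_decomp : ∀ i, ∀ j, j + i + 2 ≤ N → ∃ u v : ℝ, u ∈ iterSum (2^i) A ∧
    v ∈ iterSum (2^i) A ∧ delta^[i+1] a j = u - v := by
  intro i
  induction i with
  | zero =>
    intro j hj
    exact ⟨a (j+1), a j, mem_iterSum_one (hmem _ (by omega)),
      mem_iterSum_one (hmem _ (by omega)), by simp [delta]⟩
  | succ i ih =>
    intro j hj
    obtain ⟨u1, v1, hu1, hv1, he1⟩ := ih (j+1) (by omega)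
    obtain ⟨u2, v2, hu2, hv2, he2⟩ := ih j (by omega)
    refine ⟨u1 + v2, u2 + v1, ?_, ?_, ?_⟩
    · have := iterSum_add_mem (2^i) (2^i) u1 v2 hu1 hv2
      rwa [← two_mul, ← pow_succ'] at this
    · have := iterSum_add_mem (2^i) (2^i) u2 v1 hu2 hv1
      rwa [← two_mul, ← pow_succ'] at this
    · rw [delta_iter_succ, he1, he2]; ring

include hmem in
lemma sum_decomp : ∀ K, K ≤ N → ∀ J : ℕ → ℕ, (∀ i, i ≤ K → J i + i + 2 ≤ N) →
    ∃ u v : ℝ, u ∈ iterSum (2^K) A ∧ v ∈ iterSum (2^K - 1) A ∧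
      ∑ i ∈ Finset.range (K+1), delta^[i] a (J i) = u - v := by
  intro K
  induction K with
  | zero =>
    intro _ J hJ
    refine ⟨a (J 0), 0, mem_iterSum_one (hmem _ (by have := hJ 0 le_rfl; omega)),
      Finset.mem_singleton_self 0, by simp⟩
  | succ K ih =>
    intro hK J hJ
    obtain ⟨u, v, hu, hv, he⟩ := ih (by omega) J (fun i hi => hJ i (by omega))
    obtain ⟨u', v', hu', hv', he'⟩ := delta_decomp hmem K (J (K+1)) (by
      have := hJ (K+1) le_rfl; omega)
    refine ⟨u + u', v + v', ?_, ?_, ?_⟩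
    · have := iterSum_add_mem (2^K) (2^K) u u' hu hu'
      rwa [← two_mul, ← pow_succ'] at this
    · have := iterSum_add_mem (2^K - 1) (2^K) v v' hv hv'
      have h1 : (1:ℕ) ≤ 2^K := Nat.one_le_two_pow
      have h2 : 2^K - 1 + 2^K = 2^(K+1) - 1 := by
        have : (2:ℕ)^(K+1) = 2^K + 2^K := by rw [pow_succ]; ring
        omega
      rwa [h2] at this
    · rw [Finset.sum_range_succ, he, he']; ring

include hmon in
lemma keyLt : ∀ m ≤ k, ∀ Jt Jt' : ℕ → ℕ,
    (∀ i, i ≤ k → Jt i + i + 2 ≤ N) → (∀ i, i ≤ k → Jt' i + i + 2 ≤ N) →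
    (∀ i, i < k → Jt' (i+1) + 1 ≤ Jt' i) →
    (∀ i, i < m → Jt i = Jt' i) →
    (Jt' m + 1 ≤ Jt m) →
    ∑ i ∈ Finset.range (k+1), delta^[i] a (Jt' i) <
      ∑ i ∈ Finset.range (k+1), delta^[i] a (Jt i) := by
  intro m hm Jt Jt' hvt hvt' hdec' heq hstep
  have hsplit : ∀ g : ℕ → ℝ, ∑ i ∈ Finset.range (k+1), g i =
      ∑ i ∈ Finset.Ico 0 m, g i + ∑ i ∈ Finset.Ico m (k+1), g i := by
    intro g
    rw [Finset.range_eq_Ico, Finset.sum_Ico_consecutive _ (Nat.zero_le m) (by omega)]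
  rw [hsplit, hsplit]
  have heqpre : ∑ i ∈ Finset.Ico 0 m, delta^[i] a (Jt' i) =
      ∑ i ∈ Finset.Ico 0 m, delta^[i] a (Jt i) := by
    apply Finset.sum_congr rfl
    intro i hi
    rw [heq i (by simp at hi; omega)]
  have hmain : ∑ i ∈ Finset.Ico m (k+1), delta^[i] a (Jt' i) <
      ∑ i ∈ Finset.Ico m (k+1), delta^[i] a (Jt i) := by
    rcases Nat.eq_or_lt_of_le hm with hmk | hmk
    · subst hmk
      rw [Finset.Ico_add_one_right_eq_Icc, Finset.Icc_self, Finset.sum_singleton, Finset.sum_singleton]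
      exact monLt hmon m le_rfl _ _ (by omega) (by have := hvt m le_rfl; omega)
    · rw [Finset.sum_eq_sum_Ico_succ_bot (by omega : m < k + 1),
        Finset.sum_eq_sum_Ico_succ_bot (by omega : m < k + 1)]
      have hIcc : Finset.Ico (m+1) (k+1) = Finset.Icc (m+1) k := Finset.Ico_add_one_right_eq_Icc (m+1) k
      rw [hIcc]
      have hpos : 0 ≤ ∑ i ∈ Finset.Icc (m+1) k, delta^[i] a (Jt i) := by
        apply Finset.sum_nonneg
        intro i hi
        simp only [Finset.mem_Icc] at hi
        exact le_of_lt (deltaPos hmon i (by omega) (by omega) _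
          (by have := hvt i (by omega); omega))
      have hclaim := claimC hmon (k - (m+1)) (m+1) (by omega) (by omega) Jt'
        (fun i hi hik => hdec' i hik)
        (fun i hi hik => hvt' i hik)
      have h2 : delta^[m+1] a (Jt' (m+1) + 1) ≤ delta^[m+1] a (Jt' m) :=
        monLe hmon (m+1) (by omega) _ _ (hdec' m hmk)
          (by have := hvt' m (by omega); omega)
      have h3 := delta_iter_succ m a (Jt' m)
      have h4 : delta^[m] a (Jt' m + 1) ≤ delta^[m] a (Jt m) :=
        monLe hmon m hm _ _ hstep (by have := hvt m hm; omega)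
      linarith
  linarith

include hmon hmem in
lemma count_lemma (q : ℕ) (hq : 1 ≤ q) (hNq : (k+1) * q + 1 ≤ N) :
    (q : ℝ) ^ (k+1) ≤ ((iterSum (2^k) A - iterSum (2^k - 1) A).card : ℝ) := by
  classical
  set J : (Fin (k+1) → ℕ) → ℕ → ℕ :=
    fun t i => (if h : i < k+1 then t ⟨i, h⟩ else 0) + (k - i) * q with hJdef
  set F : (Fin (k+1) → ℕ) → ℝ :=
    fun t => ∑ i ∈ Finset.range (k+1), delta^[i] a (J t i) with hFdef
  set S : Finset (Fin (k+1) → ℕ) :=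
    Fintype.piFinset (fun _ : Fin (k+1) => Finset.range q) with hSdef
  have hmemS : ∀ t ∈ S, ∀ i : Fin (k+1), t i < q := by
    intro t ht i
    rw [hSdef, Fintype.mem_piFinset] at ht
    simpa using ht i
  have hJval : ∀ t : Fin (k+1) → ℕ, (∀ i : Fin (k+1), t i < q) →
      ∀ i, i ≤ k → J t i + i + 2 ≤ N := by
    intro t ht i hi
    have hlt : i < k + 1 := by omega
    simp only [hJdef, dif_pos hlt]
    have h1 : t ⟨i, hlt⟩ < q := ht _
    have h2 : (k - i) * q + i * q = k * q := by
      rw [← Nat.add_mul]; congr 1; omega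
    have h3 : i ≤ i * q := by
      calc i = i * 1 := by ring
        _ ≤ i * q := Nat.mul_le_mul_left i hq
    have h4 : (k+1) * q = k * q + q := by ring
    omega
  have hJdec : ∀ t : Fin (k+1) → ℕ, (∀ i : Fin (k+1), t i < q) →
      ∀ i, i < k → J t (i+1) + 1 ≤ J t i := by
    intro t ht i hik
    have h1 : i < k + 1 := by omega
    have h2 : i + 1 < k + 1 := by omega
    simp only [hJdef, dif_pos h1, dif_pos h2]
    have h3 : (k - i) * q = (k - (i+1)) * q + q := by
      rw [← Nat.succ_mul]; congr 1; omega
    have h4 : t ⟨i+1, h2⟩ < q := ht _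
    omega
  have hinj : Set.InjOn F S := by
    intro t ht t' ht' hFeq
    by_contra hne
    have hex : ∃ i : ℕ, ∃ h : i < k + 1, t ⟨i, h⟩ ≠ t' ⟨i, h⟩ := by
      obtain ⟨i, hi⟩ := Function.ne_iff.mp hne
      exact ⟨i.val, i.isLt, by simpa using hi⟩
    have hexm : ∃ m : ℕ, (∃ h : m < k + 1, t ⟨m, h⟩ ≠ t' ⟨m, h⟩) ∧
        ∀ i : ℕ, i < m → ∀ h : i < k + 1, t ⟨i, h⟩ = t' ⟨i, h⟩ := by
      refine ⟨Nat.find hex, Nat.find_spec hex, fun i hi h => ?_⟩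
      have := Nat.find_min hex hi
      push_neg at this
      exact this h
    obtain ⟨m, ⟨hmlt, hmne⟩, hmin0⟩ := hexm
    have hmin : ∀ i : ℕ, (h : i < k + 1) → i < m → t ⟨i, h⟩ = t' ⟨i, h⟩ :=
      fun i h hi => hmin0 i hi h
    have hmk : m ≤ k := by omega
    have heqJ : ∀ i, i < m → J t i = J t' i := by
      intro i hi
      have h1 : i < k + 1 := by omega
      simp only [hJdef, dif_pos h1, hmin i h1 hi]
    have heqJ' : ∀ i, i < m → J t' i = J t i := fun i hi => (heqJ i hi).symm
    rcases Nat.lt_or_ge (t' ⟨m, hmlt⟩) (t ⟨m, hmlt⟩) with hlt | hge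
    · have hstep : J t' m + 1 ≤ J t m := by
        simp only [hJdef, dif_pos hmlt]; omega
      exact absurd hFeq (ne_of_gt (keyLt hmon m hmk (J t) (J t')
        (hJval t (hmemS t ht)) (hJval t' (hmemS t' ht'))
        (hJdec t' (hmemS t' ht')) heqJ hstep))
    · have hlt' : t ⟨m, hmlt⟩ < t' ⟨m, hmlt⟩ := by omega
      have hstep : J t m + 1 ≤ J t' m := by
        simp only [hJdef, dif_pos hmlt]; omega
      exact absurd hFeq (ne_of_lt (keyLt hmon m hmk (J t') (J t)
        (hJval t' (hmemS t' ht')) (hJval t (hmemS t ht))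
        (hJdec t (hmemS t ht)) heqJ' hstep))
  have hmemF : ∀ t ∈ S, F t ∈ iterSum (2^k) A - iterSum (2^k - 1) A := by
    intro t ht
    have hkN : k ≤ N := by
      have h5 : (k+1) * 1 ≤ (k+1) * q := Nat.mul_le_mul_left _ hq
      omega
    obtain ⟨u, v, hu, hv, he⟩ := sum_decomp hmem k hkN (J t)
      (fun i hi => hJval t (hmemS t ht) i hi)
    rw [hFdef]
    simp only
    rw [he]
    exact Finset.sub_mem_sub hu hv
  have hcard := Finset.card_le_card_of_injOn F hmemF hinj
  have hScard : S.card = q ^ (k+1) := by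
    rw [hSdef, Fintype.card_piFinset]
    simp [Finset.card_range]
  rw [hScard] at hcard
  calc (q : ℝ) ^ (k+1) = ((q ^ (k+1) : ℕ) : ℝ) := by push_cast; ring
    _ ≤ _ := by exact_mod_cast hcard

end

lemma trivial_bound {k : ℕ} (A : Finset ℝ) :
    A.card ≤ (iterSum (2^k) A - iterSum (2^k - 1) A).card := by
  rcases A.eq_empty_or_nonempty with rfl | hA
  · simp
  · obtain ⟨w, hw⟩ := iterSum_nonempty hA (2^k - 1)
    apply Finset.card_le_card
    intro x hx
    have hxw : x + w ∈ iterSum (2^k) A := by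
      have h2 : 2^k = (2^k - 1) + 1 := by
        have := Nat.one_le_two_pow (n := k); omega
      have h3 : iterSum ((2^k - 1) + 1) A = A + iterSum (2^k - 1) A := rfl
      rw [h2, h3]
      exact Finset.add_mem_add hx hw
    have hx' : x = (x + w) - w := by ring
    rw [hx']
    exact Finset.sub_mem_sub hxw hw

lemma three_le_pow {kk : ℕ} (h : 4 ≤ kk) : 3 * kk + 3 ≤ 2 ^ kk := by
  induction kk, h using Nat.le_induction with
  | base => norm_num
  | succ n hn ih =>
    have : 2 ^ (n+1) = 2 * 2^n := by ring
    omega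

lemma small_nat {k N : ℕ} (hk : 2 ≤ k) (hN : N ≤ 3 * k + 2) :
    N ^ k ≤ 729 * 2 ^ (k ^ 2) := by
  rcases Nat.lt_or_ge k 4 with h4 | h4
  · interval_cases k
    · calc N ^ 2 ≤ 8 ^ 2 := Nat.pow_le_pow_left (by omega) 2
        _ ≤ 729 * 2 ^ (2 ^ 2) := by norm_num
    · calc N ^ 3 ≤ 11 ^ 3 := Nat.pow_le_pow_left (by omega) 3
        _ ≤ 729 * 2 ^ (3 ^ 2) := by norm_num
  · have h1 : N ≤ 2 ^ k := by have := three_le_pow h4; omega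
    calc N ^ k ≤ (2 ^ k) ^ k := Nat.pow_le_pow_left h1 k
      _ = 2 ^ (k ^ 2) := by rw [← pow_mul]; congr 1; ring
      _ ≤ 729 * 2 ^ (k ^ 2) := Nat.le_mul_of_pos_left _ (by norm_num)

lemma big_nat {k : ℕ} (hk : 2 ≤ k) :
    (3 * k + 3) ^ (k + 1) ≤ 729 * (2 ^ (k ^ 2) * 2 ^ (k + 1)) := by
  rcases Nat.lt_or_ge k 4 with h4 | h4
  · interval_cases k
    · norm_num
    · norm_num
  · have h1 : 3 * k + 3 ≤ 2 ^ k := three_le_pow h4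
    calc (3 * k + 3) ^ (k + 1) ≤ (2 ^ k) ^ (k + 1) := Nat.pow_le_pow_left h1 _
      _ = 2 ^ (k ^ 2) * 2 ^ k := by rw [← pow_mul, ← pow_add]; congr 1; ring
      _ ≤ 729 * (2 ^ (k ^ 2) * 2 ^ (k + 1)) := by
        have : (2:ℕ) ^ k ≤ 2 ^ (k+1) := Nat.pow_le_pow_right (by norm_num) (by omega)
        have h2 : (2:ℕ) ^ (k^2) * 2^k ≤ 2^(k^2) * 2^(k+1) := Nat.mul_le_mul_left _ this
        calc (2:ℕ) ^ (k ^ 2) * 2 ^ k ≤ 2 ^ (k^2) * 2^(k+1) := h2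
          _ ≤ 729 * (2 ^ (k ^ 2) * 2 ^ (k + 1)) := Nat.le_mul_of_pos_left _ (by norm_num)

/-- If `k ≥ 2` and `A` is a finite `k`-convex set of reals, then
`|2^k A - (2^k - 1) A| ≫ |A|^(k+1) / 2^(k²)` with an absolute implied constant. -/
theorem stmt1 :
    ∃ c : ℝ, 0 < c ∧ ∀ (k : ℕ) (A : Finset ℝ), 2 ≤ k → FinsetKConvex k A →
      c * (A.card : ℝ) ^ (k + 1) / 2 ^ (k ^ 2) ≤
        ((iterSum (2 ^ k) A - iterSum (2 ^ k - 1) A).card : ℝ) := by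
  refine ⟨1/729, by norm_num, ?_⟩
  intro k A hk hconv
  set L := A.sort (· ≤ ·) with hLdef
  set N := A.card with hNdef
  have hlen : L.length = N := Finset.length_sort _
  set a : ℕ → ℝ := fun m => L.getD m 0 with hadef
  have hmon : ∀ i ≤ k, ∀ j, j + i + 2 ≤ N → delta^[i] a j < delta^[i] a (j+1) := by
    intro i hi j hb
    have hc := listKConvex_chain k L hconv i hi
    have hlen2 : (diffList^[i] L).length = N - i := by rw [iter_diffList_length, hlen]
    have hlt : j + 1 + 1 ≤ (diffList^[i] L).length := by omega
    have hcg := chain_getD hc hlt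
    rwa [iter_diffList_getD i L j (by omega), iter_diffList_getD i L (j+1) (by omega)] at hcg
  have hmem : ∀ j, j < N → a j ∈ A := by
    intro j hj
    have hj' : j < L.length := by omega
    have : a j ∈ L := by
      rw [hadef]
      simp only [List.getD_eq_getElem _ _ hj']
      exact List.getElem_mem hj'
    rwa [hLdef, Finset.mem_sort] at this
  have hcardpos : (0:ℝ) < 2 ^ (k^2) := by positivity
  rcases Nat.lt_or_ge N (3*k + 3) with hsmall | hbig
  · -- small case: the trivial bound |sumset| ≥ |A| suffices
    have htriv : (N : ℝ) ≤ ((iterSum (2 ^ k) A - iterSum (2 ^ k - 1) A).card : ℝ) := by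
      exact_mod_cast trivial_bound A
    have hNk : (N:ℝ)^k ≤ 729 * 2^(k^2) := by
      exact_mod_cast small_nat hk (by omega)
    rw [div_le_iff₀ hcardpos]
    have hNn : (0:ℝ) ≤ (N:ℝ) := Nat.cast_nonneg N
    have key : (N:ℝ)^(k+1) ≤ 729 * 2^(k^2) * N := by
      rw [pow_succ]
      exact mul_le_mul_of_nonneg_right hNk hNn
    nlinarith [mul_le_mul_of_nonneg_left htriv (le_of_lt hcardpos)]
  · -- big case: the injection gives q^(k+1) elements with q = (N-1)/(k+1)
    set q := (N - 1) / (k + 1) with hqdef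
    have hdm := Nat.div_add_mod (N - 1) (k + 1)
    rw [← hqdef] at hdm
    have hml : (N - 1) % (k + 1) < k + 1 := Nat.mod_lt _ (by omega)
    have hq2 : 2 ≤ q := by
      rw [hqdef, Nat.le_div_iff_mul_le (by omega)]
      omega
    have hNq : (k+1) * q + 1 ≤ N := by omega
    have hqlow : 2 * N ≤ 3 * ((k+1) * q) := by omega
    have hcount := count_lemma hmon hmem q (by omega) hNq
    have hqR : 2 * (N:ℝ) ≤ 3 * ((k:ℝ)+1) * q := by
      calc 2 * (N:ℝ) = ((2*N : ℕ) : ℝ) := by push_cast; ring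
        _ ≤ ((3*((k+1)*q) : ℕ) : ℝ) := by exact_mod_cast hqlow
        _ = 3 * ((k:ℝ)+1) * q := by push_cast; ring
    have hstepA : (2*(N:ℝ)/(3*(k+1)))^(k+1) ≤ (q:ℝ)^(k+1) := by
      apply pow_le_pow_left₀ (by positivity)
      rw [div_le_iff₀ (by positivity)]
      nlinarith [hqR]
    have hnatR : ((3*k+3:ℕ):ℝ)^(k+1) ≤ 729 * (2^(k^2) * 2^(k+1)) := by
      exact_mod_cast big_nat hk
    have hstepB : 1/729 * (N:ℝ)^(k+1) / 2^(k^2) ≤ (2*(N:ℝ)/(3*(k+1)))^(k+1) := by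
      rw [div_pow, mul_pow, div_le_div_iff₀ hcardpos (by positivity)]
      have hcast2 : ((3*k+3:ℕ):ℝ) = 3*((k:ℝ)+1) := by push_cast; ring
      rw [hcast2] at hnatR
      have hNpow : (0:ℝ) ≤ (N:ℝ)^(k+1) := by positivity
      nlinarith [mul_le_mul_of_nonneg_left hnatR hNpow]
    calc (1:ℝ)/729 * (N:ℝ)^(k+1) / 2^(k^2) ≤ (2*(N:ℝ)/(3*(k+1)))^(k+1) := hstepB
      _ ≤ (q:ℝ)^(k+1) := hstepA
      _ ≤ _ := hcount
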